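/- Let H1, H2 be real separable Hilbert spaces, u ∈ H1 and v ∈ H2 unit vectors, and H a bounded linear operator from H1 to H2 with Hu = v, H*v = u, and |⟨H u⊥, v⊥⟩| < 1 for every pair of unit vectors u⊥ ⊥ u and v⊥ ⊥ v. Then for every pair of unit vectors a ∈ H1, b ∈ H2 one has ⟨Ha, b⟩ ≤ 1, and equality holds if and only if (a,b) = (u,v) or (a,b) = (−u,−v). -/

import Mathlib

open scoped RealInnerProductSpace

private lemma aux_cs (α β s t ip : ℝ) (hs : 0 ≤ s) (ht : 0 ≤ t)
    (hsa : s ^ 2 = 1 - α ^ 2) (hsb : t ^ 2 = 1 - β ^ 2) (hip : ip ≤ s * t) :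
    α * β + ip ≤ 1 := by
  nlinarith [sq_nonneg (α - β), sq_nonneg (s - t)]

private lemma aux_eq (α β : ℝ) (h1 : α ^ 2 ≤ 1) (h2 : β ^ 2 ≤ 1) (h : α * β = 1) :
    α = β ∧ α * α = 1 := by
  have hz : (α - β) ^ 2 = 0 := le_antisymm (by nlinarith) (sq_nonneg _)
  have hαβ : α = β := by nlinarith [hz]
  exact ⟨hαβ, by rw [hαβ] at h ⊢; exact h⟩

set_option maxHeartbeats 1000000 in
theorem stmt1 {H1 H2 : Type*}
    [NormedAddCommGroup H1] [InnerProductSpace ℝ H1] [CompleteSpace H1]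
    [TopologicalSpace.SeparableSpace H1]
    [NormedAddCommGroup H2] [InnerProductSpace ℝ H2] [CompleteSpace H2]
    [TopologicalSpace.SeparableSpace H2]
    (u : H1) (v : H2) (hu : ‖u‖ = 1) (hv : ‖v‖ = 1)
    (H : H1 →L[ℝ] H2)
    (hHu : H u = v) (hHv : ContinuousLinearMap.adjoint H v = u)
    (hperp : ∀ (u' : H1) (v' : H2), ‖u'‖ = 1 → ‖v'‖ = 1 →
      ⟪u, u'⟫ = 0 → ⟪v, v'⟫ = 0 → |⟪H u', v'⟫| < 1) :
    ∀ (a : H1) (b : H2), ‖a‖ = 1 → ‖b‖ = 1 →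
      ⟪H a, b⟫ ≤ 1 ∧ (⟪H a, b⟫ = 1 ↔ (a = u ∧ b = v) ∨ (a = -u ∧ b = -v)) := by
  intro a b ha hb
  have huu : ⟪u, u⟫ = 1 := by rw [real_inner_self_eq_norm_sq, hu]; norm_num
  have hvv : ⟪v, v⟫ = 1 := by rw [real_inner_self_eq_norm_sq, hv]; norm_num
  set α := ⟪u, a⟫ with hα
  set β := ⟪v, b⟫ with hβ
  set a' := a - α • u with ha'def
  set b' := b - β • v with hb'def
  clear_value α β a' b'
  have hau : ⟪a, u⟫ = α := by rw [real_inner_comm, ← hα]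
  have hbv : ⟪b, v⟫ = β := by rw [real_inner_comm, ← hβ]
  have hua' : ⟪u, a'⟫ = 0 := by
    simp [ha'def, inner_sub_right, real_inner_smul_right, huu, hu, ← hα]
  have hvb' : ⟪v, b'⟫ = 0 := by
    simp [hb'def, inner_sub_right, real_inner_smul_right, hvv, hv, ← hβ]
  have hsa : ‖a'‖ ^ 2 = 1 - α ^ 2 := by
    rw [ha'def, norm_sub_sq_real, ha, real_inner_smul_right, hau, norm_smul, hu]
    simp [sq_abs]
    ring
  have hsb : ‖b'‖ ^ 2 = 1 - β ^ 2 := by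
    rw [hb'def, norm_sub_sq_real, hb, real_inner_smul_right, hbv, norm_smul, hv]
    simp [sq_abs]
    ring
  have hHa'v : ⟪H a', v⟫ = 0 := by
    rw [← ContinuousLinearMap.adjoint_inner_right, hHv, real_inner_comm, hua']
  have hab2 : a = α • u + a' := by rw [ha'def]; abel
  have hb2 : b = β • v + b' := by rw [hb'def]; abel
  have hdecomp : ⟪H a, b⟫ = α * β + ⟪H a', b'⟫ := by
    calc ⟪H a, b⟫ = ⟪H (α • u + a'), β • v + b'⟫ := by rw [← hab2, ← hb2]
    _ = α * β + ⟪H a', b'⟫ := by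
        rw [map_add, map_smul, hHu]
        simp only [inner_add_left, inner_add_right, real_inner_smul_left,
          real_inner_smul_right, hvv, hHa'v, hvb']
        ring
  have hstrict : a' ≠ 0 → b' ≠ 0 → |⟪H a', b'⟫| < ‖a'‖ * ‖b'‖ := by
    intro h1 h2
    have hn1 : (0:ℝ) < ‖a'‖ := norm_pos_iff.mpr h1
    have hn2 : (0:ℝ) < ‖b'‖ := norm_pos_iff.mpr h2
    have key := hperp (‖a'‖⁻¹ • a') (‖b'‖⁻¹ • b') (norm_smul_inv_norm h1)
      (norm_smul_inv_norm h2)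
      (by rw [real_inner_smul_right, hua']; ring)
      (by rw [real_inner_smul_right, hvb']; ring)
    rw [map_smul, real_inner_smul_left, real_inner_smul_right, abs_mul, abs_mul,
      abs_inv, abs_inv, abs_norm, abs_norm] at key
    have h3 : ‖a'‖⁻¹ * (‖b'‖⁻¹ * |⟪H a', b'⟫|) = |⟪H a', b'⟫| / (‖a'‖ * ‖b'‖) := by
      field_simp
    rw [h3, div_lt_one (by positivity)] at key
    exact key
  have hiple : ⟪H a', b'⟫ ≤ ‖a'‖ * ‖b'‖ := by
    by_cases h1 : a' = 0
    · have hz : ⟪H a', b'⟫ = 0 := by rw [h1, map_zero, inner_zero_left]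
      rw [hz]; positivity
    by_cases h2 : b' = 0
    · have hz : ⟪H a', b'⟫ = 0 := by rw [h2, inner_zero_right]
      rw [hz]; positivity
    exact le_trans (le_abs_self _) (hstrict h1 h2).le
  have hle : ⟪H a, b⟫ ≤ 1 := by
    rw [hdecomp]
    exact aux_cs α β ‖a'‖ ‖b'‖ _ (norm_nonneg _) (norm_nonneg _) hsa hsb hiple
  refine ⟨hle, ?_, ?_⟩
  · intro heq
    rw [hdecomp] at heq
    have hip : ⟪H a', b'⟫ = 0 := by
      by_cases h1 : a' = 0
      · rw [h1, map_zero, inner_zero_left]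
      by_cases h2 : b' = 0
      · rw [h2, inner_zero_right]
      have hs := hstrict h1 h2
      have hlt : ⟪H a', b'⟫ < ‖a'‖ * ‖b'‖ := lt_of_le_of_lt (le_abs_self _) hs
      have hcs := aux_cs α β ‖a'‖ ‖b'‖ (‖a'‖ * ‖b'‖) (norm_nonneg _) (norm_nonneg _)
        hsa hsb le_rfl
      linarith
    rw [hip, add_zero] at heq
    have hαle : α ^ 2 ≤ 1 := by linarith [sq_nonneg ‖a'‖]
    have hβle : β ^ 2 ≤ 1 := by linarith [sq_nonneg ‖b'‖]
    obtain ⟨hαβ, hα2⟩ := aux_eq α β hαle hβle heq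
    have hα2' : α ^ 2 = 1 := by rw [sq]; exact hα2
    have hna : ‖a'‖ ^ 2 = 0 := by rw [hsa, hα2']; ring
    have hnb : ‖b'‖ ^ 2 = 0 := by rw [hsb, ← hαβ, hα2']; ring
    have ha'0 : a' = 0 := by
      have := pow_eq_zero_iff (n := 2) (by norm_num) |>.mp hna
      exact norm_eq_zero.mp this
    have hb'0 : b' = 0 := by
      have := pow_eq_zero_iff (n := 2) (by norm_num) |>.mp hnb
      exact norm_eq_zero.mp this
    rcases mul_self_eq_one_iff.mp hα2 with h1 | h1
    · left
      constructor
      · rw [hab2, ha'0, h1, one_smul, add_zero]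
      · rw [hb2, hb'0, ← hαβ, h1, one_smul, add_zero]
    · right
      constructor
      · rw [hab2, ha'0, h1, add_zero, neg_one_smul]
      · rw [hb2, hb'0, ← hαβ, h1, add_zero, neg_one_smul]
  · rintro (⟨rfl, rfl⟩ | ⟨rfl, rfl⟩)
    · rw [hHu]; exact hvv
    · rw [map_neg, hHu, inner_neg_neg]; exact hvv
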